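/- The 5-dimensional nilpotent commutative associative algebra A₁₀ does not degenerate to A₁₉: the structure λ of A₁₉ does NOT lie in the closure of the GL(5,ℂ)-orbit O(μ) of the structure μ of A₁₀ (closure in the standard topology on the space of bilinear maps ℂ⁵ × ℂ⁵ → ℂ⁵). -/

import Mathlib

set_option synthInstance.maxHeartbeats 1000000
set_option maxHeartbeats 1000000

open ContinuousLinearMap

/-- The underlying space `ℂⁿ`. -/
abbrev Vn (n : ℕ) := Fin n → ℂ

/-- The space of bilinear maps `ℂⁿ × ℂⁿ → ℂⁿ` (as continuous linear maps in two
arguments), carrying its standard topology as a finite-dimensional complex vector space. -/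
abbrev Bil (n : ℕ) := Vn n →L[ℂ] Vn n →L[ℂ] Vn n

/-- The action of `GL(n, ℂ)` on bilinear maps: `(g · μ)(x, y) = g (μ (g⁻¹ x) (g⁻¹ y))`. -/
noncomputable def act {n : ℕ} (g : Vn n ≃L[ℂ] Vn n) (μ : Bil n) : Bil n :=
  ((compL ℂ (Vn n) (Vn n) (Vn n)).flip (g.symm : Vn n →L[ℂ] Vn n)).comp
    (((compL ℂ (Vn n) (Vn n) (Vn n)) (g : Vn n →L[ℂ] Vn n)).comp
      (μ.comp (g.symm : Vn n →L[ℂ] Vn n)))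

@[simp] lemma act_apply {n : ℕ} (g : Vn n ≃L[ℂ] Vn n) (μ : Bil n) (x y : Vn n) :
    act g μ x y = g (μ (g.symm x) (g.symm y)) := rfl

/-- The orbit `O(μ)` of a bilinear map under the `GL(n, ℂ)`-action. -/
noncomputable def orbit {n : ℕ} (μ : Bil n) : Set (Bil n) :=
  {ν | ∃ g : Vn n ≃L[ℂ] Vn n, ν = act g μ}

/-- The standard basis `e₁, …, e₅` of `ℂ⁵` (zero-indexed: `e i` is `e_{i+1}`). -/
def e (i : Fin 5) : Vn 5 := Pi.single i 1

/-- Multiplication table of the algebra `𝐀10` (entry `(i, j)` is `eᵢ · eⱼ`). -/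
def tblA10 : Fin 5 → Fin 5 → Vn 5 :=
  ![![e 2, e 4, e 3, 0, 0],
   ![e 4, 0, 0, 0, 0],
   ![e 3, 0, 0, 0, 0],
   ![0, 0, 0, 0, 0],
   ![0, 0, 0, 0, 0]]

/-- Multiplication table of the algebra `𝐀19` (entry `(i, j)` is `eᵢ · eⱼ`). -/
def tblA19 : Fin 5 → Fin 5 → Vn 5 :=
  ![![e 2, 0, 0, 0, 0],
   ![0, e 3, 0, 0, 0],
   ![0, 0, 0, 0, 0],
   ![0, 0, 0, 0, 0],
   ![0, 0, 0, 0, 0]]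

lemma sum_single (a : Vn 5) : ∑ i, a i • e i = a := by
  have h : ∀ i : Fin 5, a i • e i = Pi.single i (a i) := by
    intro i
    rw [e, ← Pi.single_smul, smul_eq_mul, mul_one]
  simp_rw [h]
  exact Finset.univ_sum_single a

lemma bil_apply (ν : Bil 5) (a b : Vn 5) :
    ν a b = ∑ i, ∑ j, (a i * b j) • ν (e i) (e j) := by
  conv_lhs => rw [← sum_single a, ← sum_single b]
  simp only [map_sum, map_smul, ContinuousLinearMap.sum_apply,
    ContinuousLinearMap.smul_apply, Finset.smul_sum, smul_smul]
  rw [Finset.sum_comm]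
  simp_rw [mul_comm]

lemma mu_vanish (μ : Bil 5) (hμ : ∀ i j : Fin 5, μ (e i) (e j) = tblA10 i j)
    (a b : Vn 5) (ha : a 0 = 0) (hb : b 0 = 0) : μ a b = 0 := by
  rw [bil_apply μ a b]
  simp [hμ, tblA10, Fin.sum_univ_five, ha, hb, Matrix.vecHead, Matrix.vecTail]

lemma lam_eq (lam : Bil 5) (hlam : ∀ i j : Fin 5, lam (e i) (e j) = tblA19 i j)
    (a b : Vn 5) : lam a b = (a 0 * b 0) • e 2 + (a 1 * b 1) • e 3 := by
  rw [bil_apply lam a b]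
  simp [hlam, tblA19, Fin.sum_univ_five, Matrix.vecHead, Matrix.vecTail]

lemma coord0 (L : Vn 5 →L[ℂ] Vn 5) (x : Vn 5) :
    (L x) 0 = ∑ i, (L (e i)) 0 * x i := by
  conv_lhs => rw [← sum_single x]
  rw [map_sum, Finset.sum_apply]
  simp [Pi.smul_apply, smul_eq_mul, mul_comm]

/-- If a nonzero functional `cb` exists, its kernel contains a vector on which `A19` is
nonzero. -/
lemma exists_xb (lam : Bil 5)
    (hl : ∀ a b : Vn 5, lam a b = (a 0 * b 0) • e 2 + (a 1 * b 1) • e 3)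
    (cb : Vn 5) (hcb : cb ≠ 0) :
    ∃ xb : Vn 5, (∑ i, cb i * xb i) = 0 ∧ lam xb xb ≠ 0 := by
  have hcoord : ∀ x : Vn 5, x 0 ≠ 0 → lam x x ≠ 0 := by
    intro x hx h
    have h2 := congrFun h 2
    rw [hl] at h2
    simp [e, Pi.single_apply] at h2
    exact hx h2
  -- case analysis on which coordinate of cb is nonzero
  by_cases h1 : cb 1 ≠ 0
  · refine ⟨cb 1 • e 0 - cb 0 • e 1, ?_, ?_⟩
    · simp [e, Fin.sum_univ_five, Pi.single_apply]
      ring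
    · apply hcoord
      simp [e, Pi.single_apply]
      exact h1
  by_cases h2 : cb 2 ≠ 0
  · refine ⟨cb 2 • e 0 - cb 0 • e 2, ?_, ?_⟩
    · simp [e, Fin.sum_univ_five, Pi.single_apply]
      ring
    · apply hcoord
      simp [e, Pi.single_apply]
      exact h2
  by_cases h3 : cb 3 ≠ 0
  · refine ⟨cb 3 • e 0 - cb 0 • e 3, ?_, ?_⟩
    · simp [e, Fin.sum_univ_five, Pi.single_apply]
      ring
    · apply hcoord
      simp [e, Pi.single_apply]
      exact h3
  by_cases h4 : cb 4 ≠ 0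
  · refine ⟨cb 4 • e 0 - cb 0 • e 4, ?_, ?_⟩
    · simp [e, Fin.sum_univ_five, Pi.single_apply]
      ring
    · apply hcoord
      simp [e, Pi.single_apply]
      exact h4
  -- now cb 1 = cb 2 = cb 3 = cb 4 = 0
  push_neg at h1 h2 h3 h4
  refine ⟨e 1, ?_, ?_⟩
  · simp [e, Fin.sum_univ_five, Pi.single_apply, h1, h2, h3, h4]
  · intro h
    have h3' := congrFun h 3
    rw [hl] at h3'
    simp [e, Pi.single_apply] at h3'

instance : FirstCountableTopology (Bil 5) :=
  @UniformSpace.firstCountableTopology (Bil 5) _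
    (@EMetric.instIsCountablyGeneratedUniformity (Bil 5) _)

/-- The $5$-dimensional nilpotent commutative associative algebra `𝐀10` does not degenerate to
`𝐀19`: the structure `λ` of `𝐀19` does NOT lie in the closure of
the `GL(5, ℂ)`-orbit `O(μ)` of the structure `μ` of `𝐀10`. -/
theorem A10_not_deg_A19 (μ lam : Bil 5)
    (hμ : ∀ i j : Fin 5, μ (e i) (e j) = tblA10 i j)
    (hlam : ∀ i j : Fin 5, lam (e i) (e j) = tblA19 i j) :
    lam ∉ closure (orbit μ) := by
  intro hmem
  obtain ⟨f, hforb, hftend⟩ := mem_closure_iff_seq_limit.mp hmem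
  choose g hg using hforb
  -- coefficient vectors of the hyperplane functionals
  set a : ℕ → Vn 5 := fun n i => ((g n).symm (e i)) 0 with ha_def
  have ha_ne : ∀ n, a n ≠ 0 := by
    intro n h0
    have hz : ∀ i, a n i = 0 := fun i => congrFun h0 i
    have h1 := coord0 ((g n).symm : Vn 5 →L[ℂ] Vn 5) ((g n) (e 0))
    rw [show (((g n).symm : Vn 5 →L[ℂ] Vn 5) ((g n) (e 0))) = e 0 from
      (g n).symm_apply_apply (e 0)] at h1
    rw [show (e 0) 0 = 1 by simp [e],
      Finset.sum_congr rfl (fun i _ => by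
        rw [show (((g n).symm : Vn 5 →L[ℂ] Vn 5) (e i)) 0 = a n i from rfl, hz i, zero_mul])]
      at h1
    simp at h1
  -- the vanishing property along the orbit
  have hvan : ∀ n (x y : Vn 5),
      (∑ i, a n i * x i) = 0 → (∑ i, a n i * y i) = 0 → f n x y = 0 := by
    intro n x y hx hy
    rw [hg n, act_apply]
    have hx0 : ((g n).symm x) 0 = 0 := by
      rw [show ((g n).symm x) = ((g n).symm : Vn 5 →L[ℂ] Vn 5) x from rfl, coord0]
      exact hx
    have hy0 : ((g n).symm y) 0 = 0 := by
      rw [show ((g n).symm y) = ((g n).symm : Vn 5 →L[ℂ] Vn 5) y from rfl, coord0]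
      exact hy
    rw [mu_vanish μ hμ _ _ hx0 hy0, map_zero]
  -- normalize
  set c : ℕ → Vn 5 := fun n => (‖a n‖)⁻¹ • a n with hc_def
  have hc_sphere : ∀ n, c n ∈ Metric.sphere (0 : Vn 5) 1 := by
    intro n
    rw [mem_sphere_zero_iff_norm, hc_def]
    rw [norm_smul, norm_inv, norm_norm]
    exact inv_mul_cancel₀ (norm_ne_zero_iff.mpr (ha_ne n))
  obtain ⟨cb, hcb_mem, k, hk_mono, hk_tend⟩ :=
    (isCompact_sphere (0 : Vn 5) 1).tendsto_subseq hc_sphere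
  have hcb_ne : cb ≠ 0 := by
    rw [Metric.mem_sphere, dist_zero_right] at hcb_mem
    exact norm_ne_zero_iff.mp (by rw [hcb_mem]; exact one_ne_zero)
  obtain ⟨xb, hxb_ker, hxb_ne⟩ := exists_xb lam (lam_eq lam hlam) cb hcb_ne
  -- approximating sequence in the kernels
  set C : ℕ → Vn 5 := fun m => c (k m) with hC_def
  have hC_tend : Filter.Tendsto C Filter.atTop (nhds cb) := hk_tend
  have hCi : ∀ i, Filter.Tendsto (fun m => C m i) Filter.atTop (nhds (cb i)) :=
    fun i => ((continuous_apply i).tendsto cb).comp hC_tend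
  set S : ℕ → ℂ := fun m => ∑ i, C m i * xb i with hS_def
  set Tr : ℕ → ℝ := fun m => ∑ i, Complex.normSq (C m i) with hTr_def
  have hC_ne : ∀ m, C m ≠ 0 := by
    intro m h0
    have := hc_sphere (k m)
    rw [mem_sphere_zero_iff_norm] at this
    rw [show c (k m) = C m from rfl, h0, norm_zero] at this
    exact one_ne_zero this.symm
  have hTr_pos : ∀ m, 0 < Tr m := by
    intro m
    obtain ⟨i0, hi0⟩ : ∃ i, C m i ≠ 0 := by
      by_contra hcon
      push_neg at hcon
      exact hC_ne m (funext hcon)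
    exact Finset.sum_pos' (fun i _ => Complex.normSq_nonneg _)
      ⟨i0, Finset.mem_univ _, Complex.normSq_pos.mpr hi0⟩
  set Tb : ℝ := ∑ i, Complex.normSq (cb i) with hTb_def
  have hTb_pos : 0 < Tb := by
    obtain ⟨i0, hi0⟩ : ∃ i, cb i ≠ 0 := by
      by_contra hcon
      push_neg at hcon
      exact hcb_ne (funext hcon)
    exact Finset.sum_pos' (fun i _ => Complex.normSq_nonneg _)
      ⟨i0, Finset.mem_univ _, Complex.normSq_pos.mpr hi0⟩
  set X : ℕ → Vn 5 := fun m => xb - (S m / (Tr m : ℂ)) • (fun i => star (C m i)) with hX_def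
  -- X m lies in the kernel of the m-th functional
  have hXC : ∀ m, (∑ i, C m i * X m i) = 0 := by
    intro m
    have hTm : ((Tr m : ℂ)) ≠ 0 := by
      exact_mod_cast Complex.ofReal_ne_zero.mpr (ne_of_gt (hTr_pos m))
    have hexp : ∀ i, C m i * X m i =
        C m i * xb i - (S m / (Tr m : ℂ)) * (C m i * star (C m i)) := by
      intro i
      simp only [hX_def, Pi.sub_apply, Pi.smul_apply, smul_eq_mul]
      ring
    rw [Finset.sum_congr rfl (fun i _ => hexp i), Finset.sum_sub_distrib, ← Finset.mul_sum]
    have hmc : (∑ i, C m i * star (C m i)) = ((Tr m : ℂ)) := by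
      rw [hTr_def]
      push_cast
      refine Finset.sum_congr rfl fun i _ => ?_
      rw [Complex.star_def, Complex.mul_conj]
    rw [hmc, div_mul_cancel₀ _ hTm]
    simp [hS_def]
  have hXa : ∀ m, (∑ i, a (k m) i * X m i) = 0 := by
    intro m
    have hr : ((‖a (k m)‖⁻¹ : ℝ) : ℂ) ≠ 0 := by
      simp [norm_ne_zero_iff.mpr (ha_ne (k m))]
    have h0 := hXC m
    have hCe : ∀ i, C m i = ((‖a (k m)‖⁻¹ : ℝ) : ℂ) * a (k m) i := by
      intro i
      simp [hC_def, hc_def, Complex.real_smul]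
    rw [Finset.sum_congr rfl (fun i _ => by rw [hCe i, mul_assoc])] at h0
    rw [← Finset.mul_sum] at h0
    rcases mul_eq_zero.mp h0 with h | h
    · exact absurd h hr
    · exact h
  -- convergence of X to xb
  have hS_tend : Filter.Tendsto S Filter.atTop (nhds 0) := by
    rw [show (0 : ℂ) = ∑ i, cb i * xb i from hxb_ker.symm]
    exact tendsto_finset_sum _ (fun i _ => (hCi i).mul tendsto_const_nhds)
  have hT_tend : Filter.Tendsto (fun m => ((Tr m : ℝ) : ℂ)) Filter.atTop (nhds ((Tb : ℝ) : ℂ)) := by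
    apply Filter.Tendsto.comp (Complex.continuous_ofReal.tendsto _)
    exact tendsto_finset_sum _ (fun i _ =>
      (Complex.continuous_normSq.tendsto _).comp (hCi i))
  have hTb_ne : ((Tb : ℝ) : ℂ) ≠ 0 := Complex.ofReal_ne_zero.mpr (ne_of_gt hTb_pos)
  have hquot : Filter.Tendsto (fun m => S m / ((Tr m : ℝ) : ℂ)) Filter.atTop (nhds 0) := by
    have := hS_tend.div hT_tend hTb_ne
    rw [zero_div] at this
    exact this
  have hstar : Filter.Tendsto (fun m => (fun i => star (C m i) : Vn 5)) Filter.atTop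
      (nhds (fun i => star (cb i))) := by
    rw [tendsto_pi_nhds]
    intro i
    exact (continuous_star.tendsto _).comp (hCi i)
  have hX_tend : Filter.Tendsto X Filter.atTop (nhds xb) := by
    have h := (hquot.smul hstar).const_sub xb
    rw [zero_smul, sub_zero] at h
    exact h
  -- pass to the limit
  have hcontF : Continuous fun p : Bil 5 × Vn 5 × Vn 5 => p.1 p.2.1 p.2.2 := by
    have h0 : Continuous fun p : Bil 5 × Vn 5 => p.1 p.2 :=
      isBoundedBilinearMap_apply.continuous
    have h1 : Continuous fun p : (Vn 5 →L[ℂ] Vn 5) × Vn 5 => p.1 p.2 :=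
      isBoundedBilinearMap_apply.continuous
    exact h1.comp ((h0.comp (continuous_fst.prodMk
      (continuous_fst.comp continuous_snd))).prodMk
      (continuous_snd.comp continuous_snd))
  have hfk_tend : Filter.Tendsto (fun m => f (k m)) Filter.atTop (nhds lam) :=
    hftend.comp (hk_mono.tendsto_atTop)
  have happly : Filter.Tendsto (fun m => f (k m) (X m) (X m)) Filter.atTop
      (nhds (lam xb xb)) := by
    have hp : Filter.Tendsto (fun m => ((f (k m), (X m, X m)) : Bil 5 × Vn 5 × Vn 5))
        Filter.atTop (nhds (lam, (xb, xb))) :=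
      hfk_tend.prodMk_nhds (hX_tend.prodMk_nhds hX_tend)
    exact (hcontF.tendsto _).comp hp
  have hzero : (fun m => f (k m) (X m) (X m)) = fun _ => (0 : Vn 5) :=
    funext fun m => hvan (k m) _ _ (hXa m) (hXa m)
  rw [hzero] at happly
  exact hxb_ne (tendsto_nhds_unique tendsto_const_nhds happly).symm
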